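/- For every positive integer d there exists a monic polynomial f of degree d with integer coefficients such that α_n^d = f(n) for every positive integer n with gcd(n, ⌈d^{d/2}⌉!) = 1. In particular, α_p^d = f(p) for all sufficiently large primes p. -/

import Mathlib

/-- A tuple `v : Fin d → ZMod n` is zero-sum-free if no non-empty subset of its
components sums to zero in `ZMod n`. -/
def ZeroSumFree {n d : ℕ} (v : Fin d → ZMod n) : Prop :=
  ∀ S : Finset (Fin d), S.Nonempty → ∑ i ∈ S, v i ≠ 0

/-- `alphaZSF n d` is the number of zero-sum-free `d`-tuples in `(ZMod n)^d`. -/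
noncomputable def alphaZSF (n d : ℕ) : ℕ :=
  Nat.card {v : Fin d → ZMod n // ZeroSumFree v}

/-- A tuple is irreducible if `gcd(v₁, ..., v_d, n) = 1`, where components are
identified with their representatives in `{0, 1, ..., n-1}`. -/
def IrreducibleTuple {n d : ℕ} (v : Fin d → ZMod n) : Prop :=
  Nat.gcd (Finset.univ.gcd fun i => (v i).val) n = 1

/-- `betaZSF n d` is the number of irreducible zero-sum-free `d`-tuples in `(ZMod n)^d`. -/
noncomputable def betaZSF (n d : ℕ) : ℕ :=
  Nat.card {v : Fin d → ZMod n // ZeroSumFree v ∧ IrreducibleTuple v}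

open Matrix Finset Polynomial

attribute [local instance] Classical.propDecidable

private lemma amgm {k : ℕ} (hk : 0 < k) (z : Fin k → ℝ) (hz : ∀ i, 0 ≤ z i) :
    ∏ i, z i ≤ ((∑ i, z i) / k) ^ k := by
  have hk' : (k : ℝ) ≠ 0 := Nat.cast_ne_zero.2 hk.ne'
  have h := Real.geom_mean_le_arith_mean_weighted Finset.univ (fun _ => 1/(k:ℝ)) z
    (fun i _ => by positivity) (by simp; field_simp) (fun i _ => hz i)
  rw [Real.finset_prod_rpow _ _ (fun i _ => hz i)] at h
  have hP : 0 ≤ ∏ i, z i := Finset.prod_nonneg fun i _ => hz i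
  have h2 : ((∏ i, z i) ^ ((1:ℝ)/k)) ^ (k:ℕ) ≤ (∑ i, (1/(k:ℝ)) * z i) ^ (k:ℕ) :=
    pow_le_pow_left₀ (Real.rpow_nonneg hP _) h k
  rw [← Real.rpow_natCast ((∏ i, z i) ^ ((1:ℝ)/k)) k, ← Real.rpow_mul hP,
    one_div, inv_mul_cancel₀ hk', Real.rpow_one] at h2
  calc ∏ i, z i ≤ (∑ i, (1/(k:ℝ)) * z i) ^ (k:ℕ) := by simpa [one_div] using h2
    _ = ((∑ i, z i) / k) ^ k := by rw [← Finset.mul_sum]; ring_nf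

private lemma trace_eq_sum_eig {k : ℕ} (G : Matrix (Fin k) (Fin k) ℝ) (hH : G.IsHermitian) :
    G.trace = ∑ i, hH.eigenvalues i := by
  have hspec := hH.spectral_theorem
  set U : Matrix (Fin k) (Fin k) ℝ := (Matrix.IsHermitian.eigenvectorUnitary hH : Matrix (Fin k) (Fin k) ℝ)
  have hU : star U * U = 1 := Matrix.mem_unitaryGroup_iff'.mp (Matrix.IsHermitian.eigenvectorUnitary hH).2
  calc G.trace = (U * Matrix.diagonal (RCLike.ofReal ∘ hH.eigenvalues) * star U).trace := by
        conv_lhs => rw [hspec]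
        rw [Unitary.conjStarAlgAut_apply]
    _ = (star U * (U * Matrix.diagonal (RCLike.ofReal ∘ hH.eigenvalues))).trace := by
        rw [Matrix.trace_mul_comm]
    _ = (Matrix.diagonal (RCLike.ofReal ∘ hH.eigenvalues)).trace := by
        rw [← Matrix.mul_assoc, hU, Matrix.one_mul]
    _ = ∑ i, hH.eigenvalues i := by simp [Matrix.trace_diagonal]

private lemma hadamard01 {k : ℕ} (B : Matrix (Fin k) (Fin k) ℤ)
    (h : ∀ i j, B i j = 0 ∨ B i j = 1) :
    ((B.det : ℝ)) ^ 2 ≤ (k : ℝ) ^ (k : ℕ) := by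
  rcases Nat.eq_zero_or_pos k with rfl | hk
  · simp [Matrix.det_fin_zero]
  set C : Matrix (Fin k) (Fin k) ℝ := B.map (Int.cast : ℤ → ℝ) with hC
  have hdetC : C.det = (B.det : ℝ) := (RingHom.map_det (Int.castRingHom ℝ) B).symm
  have hentry : ∀ i j, C i j = 0 ∨ C i j = 1 := by
    intro i j; rcases h i j with h' | h' <;> simp [hC, h']
  set G := Cᴴ * C with hG
  have hPSD : G.PosSemidef := Matrix.posSemidef_conjTranspose_mul_self C
  have hH : G.IsHermitian := hPSD.1
  have hdetG : G.det = (B.det : ℝ) ^ 2 := by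
    rw [hG, Matrix.det_mul, Matrix.det_conjTranspose, hdetC]
    simp [sq]
  have hdiag : ∀ i, G i i ≤ k := by
    intro i
    have : G i i = ∑ j, C j i ^ 2 := by
      simp [hG, Matrix.mul_apply, Matrix.conjTranspose_apply, sq]
    rw [this]
    calc ∑ j, C j i ^ 2 ≤ ∑ _j : Fin k, (1:ℝ) := by
          apply Finset.sum_le_sum
          intro j _
          rcases hentry j i with h' | h' <;> simp [h']
      _ = k := by simp
  have htr : ∑ i, hH.eigenvalues i ≤ (k : ℝ) * k := by
    rw [← trace_eq_sum_eig G hH]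
    calc G.trace = ∑ i, G i i := rfl
      _ ≤ ∑ _i : Fin k, (k:ℝ) := Finset.sum_le_sum fun i _ => hdiag i
      _ = (k:ℝ) * k := by simp [mul_comm]
  have heignn : ∀ i, 0 ≤ hH.eigenvalues i := fun i => hPSD.eigenvalues_nonneg i
  have hprod : G.det = ∏ i, hH.eigenvalues i := by
    simpa using hH.det_eq_prod_eigenvalues
  have := amgm hk hH.eigenvalues heignn
  rw [← hdetG, hprod]
  calc ∏ i, hH.eigenvalues i ≤ ((∑ i, hH.eigenvalues i) / k) ^ k := this
    _ ≤ ((k:ℝ)) ^ k := by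
        have hknn : (0:ℝ) < k := by exact_mod_cast hk
        apply pow_le_pow_left₀
        · exact div_nonneg (Finset.sum_nonneg fun i _ => heignn i) hknn.le
        · rw [div_le_iff₀ hknn]
          exact htr

private lemma minor_natAbs_le {d k : ℕ} (hd : 0 < d) (hk : k ≤ d)
    (B : Matrix (Fin k) (Fin k) ℤ) (h : ∀ i j, B i j = 0 ∨ B i j = 1) :
    B.det.natAbs ≤ ⌈(d : ℝ) ^ ((d : ℝ) / 2)⌉₊ := by
  have h1 : ((B.det : ℝ)) ^ 2 ≤ (k : ℝ) ^ (k : ℕ) := hadamard01 B h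
  have hd1 : (1:ℝ) ≤ d := by exact_mod_cast hd
  have h2 : ((k : ℝ)) ^ (k : ℕ) ≤ (d : ℝ) ^ (d : ℕ) :=
    calc (k:ℝ) ^ k ≤ (d:ℝ) ^ k := pow_le_pow_left₀ (by positivity) (Nat.cast_le.2 hk) k
      _ ≤ (d:ℝ) ^ d := pow_le_pow_right₀ hd1 hk
  have h3 : ((d:ℝ)) ^ (d : ℕ) = ((d:ℝ) ^ ((d:ℝ)/2)) ^ 2 := by
    rw [← Real.rpow_natCast ((d:ℝ) ^ ((d:ℝ)/2)) 2, ← Real.rpow_mul (by positivity),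
      Nat.cast_ofNat, div_mul_cancel₀ _ (two_ne_zero (α := ℝ)), Real.rpow_natCast]
  have habs : (B.det.natAbs : ℝ) ≤ (d:ℝ) ^ ((d:ℝ)/2) := by
    have h4 : ((B.det : ℝ)) ^ 2 ≤ ((d:ℝ) ^ ((d:ℝ)/2)) ^ 2 := h1.trans (h2.trans_eq h3)
    have h5 := Real.sqrt_le_sqrt h4
    rwa [Real.sqrt_sq_eq_abs, Real.sqrt_sq (by positivity), ← Int.cast_abs,
      Int.abs_eq_natAbs, Int.cast_natCast] at h5
  calc B.det.natAbs = ⌈(B.det.natAbs : ℝ)⌉₊ := by rw [Nat.ceil_natCast]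
    _ ≤ ⌈(d : ℝ) ^ ((d : ℝ) / 2)⌉₊ := Nat.ceil_le_ceil habs

variable {d : ℕ}

/-- The 0/1 matrix of a family `T` of subsets of `Fin d`. -/
private def matT (T : Finset (Finset (Fin d))) : Matrix {S // S ∈ T} (Fin d) ℤ :=
  fun S i => if i ∈ S.1 then 1 else 0

private def Pk (T : Finset (Finset (Fin d))) (k : ℕ) : Prop :=
  ∃ ρ : Fin k ↪ {S // S ∈ T}, ∃ σ : Fin k ↪ Fin d, ((matT T).submatrix ρ σ).det ≠ 0

private noncomputable def rkT (d' : ℕ) (T : Finset (Finset (Fin d'))) : ℕ :=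
  Nat.findGreatest (Pk T) d'

private lemma Pk_zero (T : Finset (Finset (Fin d))) : Pk T 0 :=
  ⟨⟨Fin.elim0, fun a => a.elim0⟩, ⟨Fin.elim0, fun a => a.elim0⟩, by
    rw [Matrix.det_fin_zero]; exact one_ne_zero⟩

private lemma Pk_le {T : Finset (Finset (Fin d))} {k : ℕ} (h : Pk T k) : k ≤ d := by
  obtain ⟨-, σ, -⟩ := h
  simpa using Fintype.card_le_of_embedding σ

private lemma rkT_le (T : Finset (Finset (Fin d))) : rkT d T ≤ d := Nat.findGreatest_le d

private lemma Pk_rkT (T : Finset (Finset (Fin d))) : Pk T (rkT d T) :=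
  Nat.findGreatest_spec (Nat.zero_le d) (Pk_zero T)

private lemma not_Pk_succ (T : Finset (Finset (Fin d))) : ¬ Pk T (rkT d T + 1) := by
  intro h
  have hle : rkT d T + 1 ≤ d := Pk_le h
  exact Nat.findGreatest_is_greatest (Nat.lt_succ_self _) hle h

private lemma one_le_rkT {T : Finset (Finset (Fin d))} (hd : 0 < d)
    {S : Finset (Fin d)} (hS : S ∈ T) (hSne : S.Nonempty) : 1 ≤ rkT d T := by
  obtain ⟨i₀, hi₀⟩ := hSne
  refine Nat.le_findGreatest hd ?_
  refine ⟨⟨fun _ => ⟨S, hS⟩, fun a b _ => Subsingleton.elim a b⟩,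
    ⟨fun _ => i₀, fun a b _ => Subsingleton.elim a b⟩, ?_⟩
  rw [Matrix.det_fin_one]
  simp [matT, Matrix.submatrix_apply, hi₀]
  exact hi₀

private lemma rkT_empty (hd : 0 < d) : rkT d (∅ : Finset (Finset (Fin d))) = 0 := by
  rw [rkT, Nat.findGreatest_eq_zero_iff]
  rintro k hk - ⟨ρ, -, -⟩
  exact absurd (ρ ⟨0, hk⟩).2 (Finset.notMem_empty _)

private lemma count_eq {n : ℕ} [NeZero n] (hd : 0 < d)
    (hcop : n.Coprime (Nat.factorial ⌈(d : ℝ) ^ ((d : ℝ) / 2)⌉₊))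
    (T : Finset (Finset (Fin d))) :
    (Finset.univ.filter fun v : Fin d → ZMod n => ∀ S ∈ T, ∑ i ∈ S, v i = 0).card
      = n ^ (d - rkT d T) := by
  classical
  set r := rkT d T with hr
  obtain ⟨ρ, σ, hdet⟩ := Pk_rkT T
  set m₀ : ℤ := ((matT T).submatrix ρ σ).det with hm₀
  -- the minor is a unit mod n
  have hentry : ∀ i j, ((matT T).submatrix ρ σ) i j = 0 ∨ ((matT T).submatrix ρ σ) i j = 1 := by
    intro i j
    by_cases h : σ j ∈ (ρ i).1 <;> simp [matT, Matrix.submatrix_apply, h]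
  have hnatAbs : m₀.natAbs ≤ ⌈(d : ℝ) ^ ((d : ℝ) / 2)⌉₊ :=
    minor_natAbs_le hd (rkT_le T) _ hentry
  have hdvd : m₀.natAbs ∣ Nat.factorial ⌈(d : ℝ) ^ ((d : ℝ) / 2)⌉₊ :=
    Nat.dvd_factorial (Int.natAbs_pos.mpr hdet) hnatAbs
  have hcop2 : (m₀.natAbs).Coprime n := ((hcop.coprime_dvd_right hdvd).symm)
  have hunitAbs : IsUnit ((m₀.natAbs : ZMod n)) := (ZMod.isUnit_iff_coprime _ _).mpr hcop2
  have hunit : IsUnit ((m₀ : ZMod n)) := by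
    rcases Int.natAbs_eq m₀ with h | h
    · rw [h, Int.cast_natCast]; exact hunitAbs
    · rw [h, Int.cast_neg, Int.cast_natCast]; exact hunitAbs.neg
  set Amod : Matrix {S // S ∈ T} (Fin d) (ZMod n) := (matT T).map (Int.cast : ℤ → ZMod n)
    with hAmod
  set B : Matrix (Fin r) (Fin r) (ZMod n) := Amod.submatrix ρ σ with hB
  have hBdet : B.det = ((m₀ : ZMod n)) := by
    rw [hB, hAmod, Matrix.submatrix_map]
    have := RingHom.map_det (Int.castRingHom (ZMod n)) ((matT T).submatrix ρ σ)
    rw [RingHom.mapMatrix_apply] at this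
    exact this.symm
  have hunitB : IsUnit B.det := hBdet ▸ hunit
  letI : Invertible B := Matrix.invertibleOfIsUnitDet B hunitB
  -- key entry identity
  have key : ∀ (j : {S // S ∈ T}) (c : Fin d),
      Amod j c = ∑ i', (∑ i, Amod j (σ i) * (⅟B) i i') * Amod (ρ i') c := by
    intro j c
    set ρ' : Fin r ⊕ Fin 1 → {S // S ∈ T} := Sum.elim ρ (fun _ => j) with hρ'
    set σ' : Fin r ⊕ Fin 1 → Fin d := Sum.elim σ (fun _ => c) with hσ'
    have hz : ((matT T).submatrix ρ' σ').det = 0 := by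
      by_cases hj : ∃ i, ρ i = j
      · obtain ⟨i, hi⟩ := hj
        refine Matrix.det_zero_of_row_eq (i := Sum.inl i) (j := Sum.inr 0) (by simp) ?_
        funext c'
        simp [Matrix.submatrix_apply, hρ', hi]
      · by_cases hc : ∃ i, σ i = c
        · obtain ⟨i, hi⟩ := hc
          refine Matrix.det_zero_of_column_eq (i := Sum.inl i) (j := Sum.inr 0) (by simp) ?_
          intro r'
          simp [Matrix.submatrix_apply, hσ', hi]
        · by_contra hne
          apply not_Pk_succ T
          have hρinj : Function.Injective ρ' := by
            rintro (a | a) (b | b) h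
            · rw [ρ.injective h]
            · exact absurd ⟨a, h⟩ hj
            · exact absurd ⟨b, h.symm⟩ hj
            · rw [Subsingleton.elim a b]
          have hσinj : Function.Injective σ' := by
            rintro (a | a) (b | b) h
            · rw [σ.injective h]
            · exact absurd ⟨a, h⟩ hc
            · exact absurd ⟨b, h.symm⟩ hc
            · rw [Subsingleton.elim a b]
          refine ⟨⟨ρ' ∘ finSumFinEquiv.symm, hρinj.comp finSumFinEquiv.symm.injective⟩,
            ⟨σ' ∘ finSumFinEquiv.symm, hσinj.comp finSumFinEquiv.symm.injective⟩, ?_⟩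
          have : (matT T).submatrix (ρ' ∘ finSumFinEquiv.symm) (σ' ∘ finSumFinEquiv.symm)
              = ((matT T).submatrix ρ' σ').submatrix (finSumFinEquiv.symm) (finSumFinEquiv.symm) :=
            rfl
          rw [Function.Embedding.coeFn_mk, Function.Embedding.coeFn_mk, this,
            Matrix.det_submatrix_equiv_self]
          exact hne
    have hzmod : (Amod.submatrix ρ' σ').det = 0 := by
      have : Amod.submatrix ρ' σ' = ((matT T).submatrix ρ' σ').map (Int.cast : ℤ → ZMod n) :=
        (Matrix.submatrix_map _ _ _ _)
      have h2 := RingHom.map_det (Int.castRingHom (ZMod n)) ((matT T).submatrix ρ' σ')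
      rw [RingHom.mapMatrix_apply, hz, map_zero] at h2
      rw [this]
      exact h2.symm
    have hFB : Amod.submatrix ρ' σ' = Matrix.fromBlocks B
        (Matrix.of fun i (_ : Fin 1) => Amod (ρ i) c)
        (Matrix.of fun (_ : Fin 1) i => Amod j (σ i))
        (Matrix.of fun (_ : Fin 1) (_ : Fin 1) => Amod j c) := by
      ext (a | a) (b | b) <;> simp [Matrix.submatrix_apply, hρ', hσ', hB]
    rw [hFB, Matrix.det_fromBlocks₁₁] at hzmod
    have h0 : (Matrix.of (fun (_ : Fin 1) (_ : Fin 1) => Amod j c)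
        - Matrix.of (fun (_ : Fin 1) i => Amod j (σ i)) * ⅟B
          * Matrix.of (fun i (_ : Fin 1) => Amod (ρ i) c)).det = 0 := by
      exact (IsUnit.mul_right_eq_zero hunitB).mp hzmod
    rw [Matrix.det_fin_one] at h0
    have h1 := sub_eq_zero.mp h0
    calc Amod j c = ((Matrix.of fun (_ : Fin 1) i => Amod j (σ i)) * ⅟B
          * Matrix.of fun i (_ : Fin 1) => Amod (ρ i) c) 0 0 := h1
      _ = ∑ i', (∑ i, Amod j (σ i) * ⅟B i i') * Amod (ρ i') c := by
          simp [Matrix.mul_apply]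
  -- all rows are combinations of the ρ rows
  have rows : ∀ v : Fin d → ZMod n, (∀ i : Fin r, ∑ c, Amod (ρ i) c * v c = 0) →
      ∀ j, ∑ c, Amod j c * v c = 0 := by
    intro v hv j
    calc ∑ c, Amod j c * v c
        = ∑ c, (∑ i', (∑ i, Amod j (σ i) * (⅟B) i i') * Amod (ρ i') c) * v c :=
          Finset.sum_congr rfl fun c _ => by rw [← key j c]
      _ = ∑ i', ∑ c, (∑ i, Amod j (σ i) * (⅟B) i i') * (Amod (ρ i') c * v c) := by
          rw [Finset.sum_comm]
          refine Finset.sum_congr rfl fun c _ => ?_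
          rw [Finset.sum_mul]
          exact Finset.sum_congr rfl fun i' _ => by ring
      _ = 0 := by
          refine Finset.sum_eq_zero fun i' _ => ?_
          rw [← Finset.mul_sum, hv i', mul_zero]
  have hsum : ∀ (s : {S // S ∈ T}) (v : Fin d → ZMod n),
      ∑ c, Amod s c * v c = ∑ i ∈ s.1, v i := by
    intro s v
    have h' : ∀ c, Amod s c * v c = if c ∈ s.1 then v c else 0 := by
      intro c; by_cases h : c ∈ s.1 <;> simp [hAmod, matT, Matrix.map_apply, h]
    rw [Finset.sum_congr rfl fun c _ => h' c, Finset.sum_ite_mem, Finset.univ_inter]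
  have hfilter : (Finset.univ.filter fun v : Fin d → ZMod n => ∀ S ∈ T, ∑ i ∈ S, v i = 0)
      = Finset.univ.filter (fun v => ∀ i : Fin r, ∑ c, Amod (ρ i) c * v c = 0) := by
    ext v
    simp only [Finset.mem_filter, Finset.mem_univ, true_and]
    constructor
    · intro h i
      rw [hsum (ρ i) v]
      exact h (ρ i).1 (ρ i).2
    · intro h S hS
      have h2 := rows v h ⟨S, hS⟩
      rwa [hsum ⟨S, hS⟩ v] at h2
  set Φ : (Fin d → ZMod n) →+ (Fin r → ZMod n) :=
    { toFun := fun v i => ∑ c, Amod (ρ i) c * v c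
      map_zero' := by funext i; simp
      map_add' := by
        intro x y; funext i
        simp [mul_add, Finset.sum_add_distrib] } with hΦ
  have hext : ∀ (f : Fin d → ZMod n) (x : Fin r → ZMod n),
      ∑ c, f c * Function.extend σ x 0 c = ∑ i', f (σ i') * x i' := by
    intro f x
    have hzero : ∀ c ∈ Finset.univ, c ∉ Finset.univ.image σ →
        f c * Function.extend σ x 0 c = 0 := by
      intro c _ hc
      have hne : ¬∃ a, σ a = c := by
        rintro ⟨a, ha⟩; exact hc (Finset.mem_image.mpr ⟨a, Finset.mem_univ a, ha⟩)
      rw [Function.extend_apply' _ _ _ hne, Pi.zero_apply, mul_zero]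
    rw [← Finset.sum_subset (Finset.subset_univ (Finset.univ.image σ)) hzero,
      Finset.sum_image (fun a _ b _ h => σ.injective h)]
    exact Finset.sum_congr rfl fun i' _ => by rw [σ.injective.extend_apply]
  have hsurj : Function.Surjective Φ := by
    intro y
    refine ⟨Function.extend σ ((⅟B).mulVec y) 0, ?_⟩
    funext i
    show ∑ c, Amod (ρ i) c * Function.extend σ ((⅟B).mulVec y) 0 c = y i
    rw [hext]
    calc ∑ i', Amod (ρ i) (σ i') * (⅟B).mulVec y i'
        = ∑ i', ∑ c, B i i' * ((⅟B) i' c * y c) := by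
          refine Finset.sum_congr rfl fun i' _ => ?_
          rw [Matrix.mulVec, dotProduct, Finset.mul_sum]
          rfl
      _ = ∑ c, (∑ i', B i i' * (⅟B) i' c) * y c := by
          rw [Finset.sum_comm]
          refine Finset.sum_congr rfl fun c _ => ?_
          rw [Finset.sum_mul]
          exact Finset.sum_congr rfl fun i' _ => by ring
      _ = y i := by
          have hBB : B * ⅟B = 1 := mul_invOf_self B
          have h1 : ∀ c, (∑ i', B i i' * (⅟B) i' c)
              = (1 : Matrix (Fin r) (Fin r) (ZMod n)) i c := by
            intro c; rw [← Matrix.mul_apply, hBB]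
          simp_rw [h1]
          simp [Matrix.one_apply]
  have hcard : (Finset.univ.filter
      (fun v : Fin d → ZMod n => ∀ i : Fin r, ∑ c, Amod (ρ i) c * v c = 0)).card
      = Nat.card Φ.ker := by
    have e : {v : Fin d → ZMod n // ∀ i : Fin r, ∑ c, Amod (ρ i) c * v c = 0} ≃ Φ.ker :=
      Equiv.subtypeEquivRight fun v => by
        rw [AddMonoidHom.mem_ker]
        constructor
        · intro h; funext i; exact h i
        · intro h i; exact congrFun h i
    calc (Finset.univ.filter
        (fun v : Fin d → ZMod n => ∀ i : Fin r, ∑ c, Amod (ρ i) c * v c = 0)).card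
        = Fintype.card {v : Fin d → ZMod n // ∀ i : Fin r, ∑ c, Amod (ρ i) c * v c = 0} :=
          (Fintype.card_subtype _).symm
      _ = Nat.card {v : Fin d → ZMod n // ∀ i : Fin r, ∑ c, Amod (ρ i) c * v c = 0} :=
          (Nat.card_eq_fintype_card).symm
      _ = Nat.card Φ.ker := Nat.card_congr e
  have h1 : Nat.card (Fin d → ZMod n)
      = Nat.card ((Fin d → ZMod n) ⧸ Φ.ker) * Nat.card Φ.ker :=
    AddSubgroup.card_eq_card_quotient_mul_card_addSubgroup _
  have h2 : Nat.card ((Fin d → ZMod n) ⧸ Φ.ker) = Nat.card (Fin r → ZMod n) :=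
    Nat.card_congr (QuotientAddGroup.quotientKerEquivOfSurjective Φ hsurj).toEquiv
  have hdom : Nat.card (Fin d → ZMod n) = n ^ d := by
    simp [Nat.card_pi, Nat.card_zmod]
  have hcodom : Nat.card (Fin r → ZMod n) = n ^ r := by
    simp [Nat.card_pi, Nat.card_zmod]
  have hker_card : Nat.card Φ.ker = n ^ (d - r) := by
    have hpos : 0 < n ^ r := pow_pos (Nat.pos_of_ne_zero (NeZero.ne n)) r
    apply Nat.eq_of_mul_eq_mul_left hpos
    rw [← pow_add]
    rw [Nat.add_sub_cancel' (rkT_le T)]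
    rw [← hdom, h1, h2, hcodom]
  rw [hfilter, hcard, hker_card]

private lemma alpha_eq_sum (n : ℕ) [NeZero n] :
    (alphaZSF n d : ℤ) =
      ∑ T ∈ (Finset.univ.filter fun S : Finset (Fin d) => S.Nonempty).powerset,
        (-1 : ℤ) ^ T.card *
          ((Finset.univ.filter
            fun v : Fin d → ZMod n => ∀ S ∈ T, ∑ i ∈ S, v i = 0).card : ℤ) := by
  classical
  set 𝒮 := Finset.univ.filter fun S : Finset (Fin d) => S.Nonempty with h𝒮
  have hZSF : ∀ v : Fin d → ZMod n, ZeroSumFree v ↔ ∀ S ∈ 𝒮, ∑ i ∈ S, v i ≠ 0 := by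
    intro v; constructor
    · intro h S hS; exact h S ((Finset.mem_filter.mp hS).2)
    · intro h S hS; exact h S (Finset.mem_filter.mpr ⟨Finset.mem_univ S, hS⟩)
  have halpha : alphaZSF n d
      = (Finset.univ.filter fun v : Fin d → ZMod n => ZeroSumFree v).card := by
    rw [alphaZSF, Nat.card_eq_fintype_card, Fintype.card_subtype]
  have hind : ∀ v : Fin d → ZMod n,
      (if ZeroSumFree v then (1:ℤ) else 0)
        = ∏ S ∈ 𝒮, ((-(if ∑ i ∈ S, v i = 0 then (1:ℤ) else 0)) + 1) := by
    intro v
    by_cases h : ZeroSumFree v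
    · rw [if_pos h]
      symm
      apply Finset.prod_eq_one
      intro S hS
      rw [if_neg ((hZSF v).mp h S hS), neg_zero, zero_add]
    · rw [if_neg h]
      obtain ⟨S, hS, hSsum⟩ : ∃ S ∈ 𝒮, ∑ i ∈ S, v i = 0 := by
        by_contra hc; push_neg at hc; exact h ((hZSF v).mpr hc)
      symm
      apply Finset.prod_eq_zero hS
      rw [if_pos hSsum, neg_add_cancel]
  calc (alphaZSF n d : ℤ)
      = ∑ v : Fin d → ZMod n, if ZeroSumFree v then (1:ℤ) else 0 := by
        rw [halpha, Finset.card_filter]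
        push_cast
        rfl
    _ = ∑ v : Fin d → ZMod n,
          ∑ T ∈ 𝒮.powerset, (∏ S ∈ T, -(if ∑ i ∈ S, v i = 0 then (1:ℤ) else 0))
            * ∏ _S ∈ 𝒮 \ T, (1:ℤ) := by
        refine Finset.sum_congr rfl fun v _ => ?_
        rw [hind v, Finset.prod_add]
    _ = ∑ T ∈ 𝒮.powerset, (-1:ℤ) ^ T.card
          * ∑ v : Fin d → ZMod n, ∏ S ∈ T, (if ∑ i ∈ S, v i = 0 then (1:ℤ) else 0) := by
        rw [Finset.sum_comm]
        refine Finset.sum_congr rfl fun T _ => ?_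
        rw [Finset.mul_sum]
        refine Finset.sum_congr rfl fun v _ => ?_
        rw [Finset.prod_const_one, mul_one]
        calc ∏ S ∈ T, -(if ∑ i ∈ S, v i = 0 then (1:ℤ) else 0)
            = ∏ S ∈ T, ((-1) * (if ∑ i ∈ S, v i = 0 then (1:ℤ) else 0)) :=
              Finset.prod_congr rfl fun S _ => neg_eq_neg_one_mul _
          _ = (-1)^T.card * ∏ S ∈ T, (if ∑ i ∈ S, v i = 0 then (1:ℤ) else 0) := by
              rw [Finset.prod_mul_distrib, Finset.prod_const]
    _ = ∑ T ∈ 𝒮.powerset, (-1 : ℤ) ^ T.card *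
          ((Finset.univ.filter
            fun v : Fin d → ZMod n => ∀ S ∈ T, ∑ i ∈ S, v i = 0).card : ℤ) := by
        refine Finset.sum_congr rfl fun T _ => ?_
        congr 1
        rw [← Finset.sum_boole]
        refine Finset.sum_congr rfl fun v _ => ?_
        rw [Finset.prod_boole]
        convert rfl
theorem alpha_characteristic_polynomial_gcd (d : ℕ) (hd : 0 < d) :
    ∃ f : Polynomial ℤ, f.Monic ∧ f.natDegree = d ∧
      (∀ n : ℕ, 0 < n → Nat.Coprime n (Nat.factorial ⌈(d : ℝ) ^ ((d : ℝ) / 2)⌉₊) →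
        (alphaZSF n d : ℤ) = f.eval (n : ℤ)) ∧
      (∃ N : ℕ, ∀ p : ℕ, Nat.Prime p → N ≤ p → (alphaZSF p d : ℤ) = f.eval (p : ℤ)) := by
  classical
  set 𝒮 := Finset.univ.filter fun S : Finset (Fin d) => S.Nonempty with h𝒮
  set f : Polynomial ℤ :=
    ∑ T ∈ 𝒮.powerset, Polynomial.C ((-1:ℤ)^T.card) * Polynomial.X ^ (d - rkT d T) with hf
  have hmem : (∅ : Finset (Finset (Fin d))) ∈ 𝒮.powerset := Finset.empty_mem_powerset _
  have hterm : Polynomial.C ((-1:ℤ)^(∅ : Finset (Finset (Fin d))).card)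
      * Polynomial.X ^ (d - rkT d ∅) = Polynomial.X ^ d := by
    rw [Finset.card_empty, pow_zero, Polynomial.C_1, one_mul, rkT_empty hd, Nat.sub_zero]
  set g : Polynomial ℤ :=
    ∑ T ∈ 𝒮.powerset.erase ∅, Polynomial.C ((-1:ℤ)^T.card) * Polynomial.X ^ (d - rkT d T)
    with hg
  have hsplit : f = Polynomial.X ^ d + g := by
    rw [hf, ← Finset.add_sum_erase _ _ hmem, hterm, hg]
  have hdegg : g.degree < (d : ℕ) := by
    rw [hg]
    refine lt_of_le_of_lt (Polynomial.degree_sum_le _ _) ?_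
    rw [Finset.sup_lt_iff (by exact_mod_cast WithBot.bot_lt_coe d)]
    intro T hT
    refine lt_of_le_of_lt (Polynomial.degree_C_mul_X_pow_le _ _) ?_
    have hTne : T ≠ ∅ := Finset.ne_of_mem_erase hT
    have hTsub : T ⊆ 𝒮 := Finset.mem_powerset.mp (Finset.mem_of_mem_erase hT)
    obtain ⟨S, hS⟩ := Finset.nonempty_iff_ne_empty.mpr hTne
    have hSne : S.Nonempty := (Finset.mem_filter.mp (hTsub hS)).2
    have h1 : 1 ≤ rkT d T := one_le_rkT hd hS hSne
    have : d - rkT d T < d := by omega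
    exact_mod_cast this
  have hmonic : f.Monic := by
    rw [hsplit]
    exact Polynomial.monic_X_pow_add hdegg
  have hnat : f.natDegree = d := by
    have hdeg : f.degree = (d : ℕ) := by
      rw [hsplit, Polynomial.degree_add_eq_left_of_degree_lt
        (by rw [Polynomial.degree_X_pow]; exact hdegg), Polynomial.degree_X_pow]
    exact Polynomial.natDegree_eq_of_degree_eq_some hdeg
  have hmain : ∀ n : ℕ, 0 < n → Nat.Coprime n (Nat.factorial ⌈(d : ℝ) ^ ((d : ℝ) / 2)⌉₊) →
      (alphaZSF n d : ℤ) = f.eval (n : ℤ) := by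
    intro n hn hcop
    haveI : NeZero n := ⟨hn.ne'⟩
    have heval : f.eval (n:ℤ)
        = ∑ T ∈ 𝒮.powerset, (-1:ℤ)^T.card * (n:ℤ)^(d - rkT d T) := by
      rw [hf, Polynomial.eval_finset_sum]
      exact Finset.sum_congr rfl fun T _ => by simp
    rw [alpha_eq_sum n, heval]
    refine Finset.sum_congr rfl fun T _ => ?_
    congr 1
    rw [count_eq hd hcop T]
    push_cast
    rfl
  refine ⟨f, hmonic, hnat, hmain, ?_⟩
  refine ⟨Nat.factorial ⌈(d : ℝ) ^ ((d : ℝ) / 2)⌉₊ + 1, fun p hp hNp => ?_⟩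
  have hcop : p.Coprime (Nat.factorial ⌈(d : ℝ) ^ ((d : ℝ) / 2)⌉₊) := by
    rw [Nat.Prime.coprime_iff_not_dvd hp]
    intro hdvd
    have := Nat.le_of_dvd (Nat.factorial_pos _) hdvd
    omega
  exact hmain p hp.pos hcop
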